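/- Let F be a probability measure on [0,1] with a density f : [0,1] → [0,1] such that t ↦ t·f(t) is non-decreasing. For α in [0,1], let s_α be the uniform-bid-shading strategy that bids α·v deterministically for every value v. Then sup over all probability measures H on [0,1] of Reg_F(s_α, H) = max{ α · E_{v∼F}[v], E_{v∼F}[(v − α·F⁻(1))⁺] }. -/

import Mathlib

open MeasureTheory ProbabilityTheory Set

noncomputable section

namespace FPA

/-- The unit interval `[0,1] ⊆ ℝ`. -/
def Iu : Set ℝ := Set.Icc 0 1

/-- `μ` is a probability measure on `[0,1]`. -/
def IsProbOn (μ : Measure ℝ) : Prop := IsProbabilityMeasure μ ∧ μ Iu = 1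

/-- A bidding strategy: a Markov kernel from `[0,1]` to `[0,1]`. -/
def IsStrategy (s : Kernel ℝ ℝ) : Prop := IsMarkovKernel s ∧ ∀ v : ℝ, s v Iu = 1

/-- The buyer's utility `u(b,h;v) = (v−b)·1{b ≥ h}`. -/
def util (b h v : ℝ) : ℝ := (v - b) * (if h ≤ b then 1 else 0)

/-- Expected utility `U_F(s,H)`. -/
def eUtil (F : Measure ℝ) (s : Kernel ℝ ℝ) (H : Measure ℝ) : ℝ :=
  ∫ v, ∫ h, ∫ b, util b h v ∂(s v) ∂H ∂F

/-- Regret `Reg_F(s,H) = sup_{s'∈S} U_F(s',H) − U_F(s,H)`. -/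
def regret (F : Measure ℝ) (s : Kernel ℝ ℝ) (H : Measure ℝ) : ℝ :=
  (⨆ s' : {k : Kernel ℝ ℝ // IsStrategy k}, eUtil F s'.1 H) - eUtil F s H

/-- Induced bid distribution `P_{s,F}`. -/
def bidDist (F : Measure ℝ) (s : Kernel ℝ ℝ) : Measure ℝ := F.bind (fun v => s v)

/-- CDF of a measure on `[0,1]`: `F(x) = F([0,x])`. -/
def cdf01 (F : Measure ℝ) (x : ℝ) : ℝ := (F (Set.Iic x)).toReal

/-- Generalized inverse `F⁻(t) = inf {x ∈ [0,1] : F(x) ≥ t}`. -/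
def qinv (F : Measure ℝ) (t : ℝ) : ℝ := sInf {x | x ∈ Iu ∧ t ≤ cdf01 F x}

/-- Full-information benchmark against a deterministic highest competing bid `h`. -/
def bench (F : Measure ℝ) (h : ℝ) : ℝ := ∫ v, (v - h) * (if h ≤ v then 1 else 0) ∂F

/-- Full-information regret `R_F(s,H)`. -/
def fregret (F : Measure ℝ) (s : Kernel ℝ ℝ) (H : Measure ℝ) : ℝ :=
  (∫ h, bench F h ∂H) - eUtil F s H

/-- Absolute continuity of a function on `[0,1]` (FTC characterization). -/
def AbsContOn01 (f : ℝ → ℝ) : Prop :=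
  ∃ g : ℝ → ℝ, IntervalIntegrable g volume 0 1 ∧
    ∀ x ∈ Iu, f x = f 0 + ∫ t in (0:ℝ)..x, g t

/-- The set of quantiles corresponding to value `v`: `Y(v) = {y ∈ [0,1] : F⁻(y) = v}`. -/
def Yset (F : Measure ℝ) (v : ℝ) : Set ℝ := {y | y ∈ Iu ∧ qinv F y = v}

/-- Uniform distribution on a set `A ⊆ ℝ`. -/
def unifOn (A : Set ℝ) : Measure ℝ := (volume A)⁻¹ • volume.restrict A

/-- `s` is the bidding strategy corresponding to the quantile-based bidding strategy `Q`:
it bids `Q(F(v))` when `F({v}) = 0`, and the pushforward under `Q` of the uniform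
distribution on `Y(v)` when `F({v}) > 0`. -/
def IsQuantileStrategy (F : Measure ℝ) (Q : ℝ → ℝ) (s : Kernel ℝ ℝ) : Prop :=
  IsStrategy s ∧ ∀ v ∈ Iu,
    s v = if F {v} = 0 then Measure.dirac (Q (cdf01 F v)) else (unifOn (Yset F v)).map Q

/-- The candidate worst-case highest-competing-bid CDF
`H*(x) = exp(−∫_{(Q*)⁻¹(x)}^1 dt/(1−F(Q*(t))))`. -/
def Hstar (F : Measure ℝ) (Q : ℝ → ℝ) (x : ℝ) : ℝ :=
  Real.exp (-(∫ t in (Function.invFunOn Q Iu x)..(1:ℝ), 1 / (1 - cdf01 F (Q t))))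



section Helpers

lemma msIu : MeasurableSet Iu := measurableSet_Icc

lemma ae_mem_Iu {μ : Measure ℝ} (h1 : IsProbabilityMeasure μ) (h2 : μ Iu = 1) :
    ∀ᵐ x ∂μ, x ∈ Iu := by
  rw [ae_iff]
  have : μ Iuᶜ = 0 := by
    rw [measure_compl msIu (measure_ne_top μ _), h2, measure_univ, tsub_self]
  simpa [Set.compl_def] using this

lemma util_le (b h v : ℝ) : util b h v ≤ max (v - h) 0 := by
  unfold util
  split_ifs with hb
  · calc (v - b) * 1 = v - b := mul_one _
      _ ≤ v - h := by linarith
      _ ≤ max (v - h) 0 := le_max_left _ _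
  · simpa using le_max_right (v - h) (0:ℝ)

lemma abs_util_le {b v : ℝ} (hb : b ∈ Iu) (hv : v ∈ Iu) (h : ℝ) : ‖util b h v‖ ≤ 1 := by
  unfold util
  rw [Real.norm_eq_abs, abs_mul]
  have h1 : |v - b| ≤ 1 := by
    rw [abs_le]; constructor <;> [linarith [hv.1, hb.2]; linarith [hv.2, hb.1]]
  have h2 : |(if h ≤ b then (1:ℝ) else 0)| ≤ 1 := by split_ifs <;> norm_num
  calc |v - b| * |(if h ≤ b then (1:ℝ) else 0)| ≤ 1 * 1 := by
        exact mul_le_mul h1 h2 (abs_nonneg _) (by norm_num)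
    _ = 1 := by norm_num

/-- monotone integral endpoint lemma -/
lemma integral_le_max_of_monotone (ρ : ℝ → ℝ) (hρ : Monotone ρ) {h A : ℝ}
    (h0 : 0 ≤ h) (hA : h ≤ A) :
    ∫ u in (0:ℝ)..h, ρ u ≤ max 0 (∫ u in (0:ℝ)..A, ρ u) := by
  have i1 : IntervalIntegrable ρ volume 0 h := hρ.intervalIntegrable
  have i2 : IntervalIntegrable ρ volume h A := hρ.intervalIntegrable
  rcases le_or_gt (ρ h) 0 with hneg | hpos
  · refine le_max_of_le_left ?_
    have hle : ∫ u in (0:ℝ)..h, ρ u ≤ ∫ u in (0:ℝ)..h, ρ h := by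
      apply intervalIntegral.integral_mono_on h0 i1 intervalIntegrable_const
      intro x hx; exact hρ hx.2
    have : ∫ u in (0:ℝ)..h, (ρ h) = h * ρ h := by simp [mul_comm]
    nlinarith [mul_nonpos_of_nonneg_of_nonpos h0 hneg]
  · refine le_max_of_le_right ?_
    have hge : ∫ u in h..A, (ρ h) ≤ ∫ u in h..A, ρ u := by
      apply intervalIntegral.integral_mono_on hA intervalIntegrable_const i2
      intro x hx; exact hρ hx.1
    have hconst : ∫ u in h..A, (ρ h) = (A - h) * ρ h := by simp [mul_comm]
    have hsplit := intervalIntegral.integral_add_adjacent_intervals i1 i2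
    nlinarith [mul_nonneg (by linarith : (0:ℝ) ≤ A - h) hpos.le]


lemma norm_eUtil_le_one {F H : Measure ℝ} (hF : IsProbOn F) (hH : IsProbabilityMeasure H)
    {k : Kernel ℝ ℝ} (hk : IsStrategy k) : ‖eUtil F k H‖ ≤ 1 := by
  obtain ⟨hkm, hkIu⟩ := hk
  haveI := hF.1
  have inner : ∀ v ∈ Iu, ∀ h : ℝ, ‖∫ b, util b h v ∂(k v)‖ ≤ 1 := by
    intro v hv h
    have : IsProbabilityMeasure (k v) := hkm.isProbabilityMeasure v
    have := norm_integral_le_of_norm_le_const (μ := k v) (f := fun b => util b h v) (C := 1) ?_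
    · simpa [measure_univ] using this
    · filter_upwards [ae_mem_Iu this (hkIu v)] with b hb
      exact abs_util_le hb hv h
  have mid : ∀ v ∈ Iu, ‖∫ h, ∫ b, util b h v ∂(k v) ∂H‖ ≤ 1 := by
    intro v hv
    have := norm_integral_le_of_norm_le_const (μ := H)
      (f := fun h => ∫ b, util b h v ∂(k v)) (C := 1)
      (Filter.Eventually.of_forall (fun h => inner v hv h))
    simpa [measure_univ] using this
  have := norm_integral_le_of_norm_le_const (μ := F)
    (f := fun v => ∫ h, ∫ b, util b h v ∂(k v) ∂H) (C := 1) ?_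
  · simpa [measure_univ, eUtil] using this
  · filter_upwards [ae_mem_Iu hF.1 hF.2] with v hv using mid v hv

lemma eUtil_shade {F : Measure ℝ} (hF : IsProbOn F) (H : Measure ℝ) {α : ℝ} {s : Kernel ℝ ℝ}
    (hshade : ∀ v ∈ Iu, s v = Measure.dirac (α * v)) :
    eUtil F s H = ∫ v, (v - α * v) * (H (Iic (α * v))).toReal ∂F := by
  unfold eUtil
  apply integral_congr_ae
  filter_upwards [ae_mem_Iu hF.1 hF.2] with v hv
  rw [hshade v hv]
  have hin : ∀ h : ℝ, ∫ b, util b h v ∂(Measure.dirac (α * v)) = util (α * v) h v :=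
    fun h => integral_dirac _ _
  simp_rw [hin]
  unfold util
  rw [MeasureTheory.integral_const_mul]
  congr 1
  have : (fun h : ℝ => if h ≤ α * v then (1:ℝ) else 0)
      = (Iic (α * v)).indicator (fun _ => (1:ℝ)) := by
    funext h; by_cases hh : h ≤ α * v <;> simp [Set.indicator, hh]
  rw [this, MeasureTheory.integral_indicator_const _ measurableSet_Iic]
  simp [measureReal_def]

lemma eUtil_det (F : Measure ℝ) {g : ℝ → ℝ} (hg : Measurable g) (c : ℝ) :
    eUtil F (Kernel.deterministic g hg) (Measure.dirac c) = ∫ v, util (g v) c v ∂F := by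
  unfold eUtil
  refine integral_congr_ae (Filter.Eventually.of_forall fun v => ?_)
  simp only [Kernel.deterministic_apply]
  simp_rw [integral_dirac]

lemma strategy_det {g : ℝ → ℝ} (hg : Measurable g) (hmaps : ∀ v, g v ∈ Iu) :
    IsStrategy (Kernel.deterministic g hg) := by
  constructor
  · infer_instance
  · intro v
    rw [Kernel.deterministic_apply, Measure.dirac_apply' _ msIu]
    simp [hmaps v]


section Fprops
variable {F : Measure ℝ} {f : ℝ → ℝ}
  (hFp : IsProbabilityMeasure F) (hFIu : F Iu = 1)
  (hfmaps : MapsTo f Iu Iu)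
  (hdens : F = (volume.restrict Iu).withDensity (fun t => ENNReal.ofReal (f t)))

include hfmaps hdens in
/-- F is dominated by Lebesgue on Iu -/
lemma F_le_vol {A : Set ℝ} (hA : MeasurableSet A) : F A ≤ volume (A ∩ Iu) := by
  rw [hdens, withDensity_apply _ hA]
  calc ∫⁻ t in A, ENNReal.ofReal (f t) ∂(volume.restrict Iu)
      ≤ ∫⁻ _ in A, 1 ∂(volume.restrict Iu) := by
        apply lintegral_mono_ae
        rw [Measure.restrict_restrict hA]
        filter_upwards [ae_restrict_mem (hA.inter msIu)] with t ht
        exact ENNReal.ofReal_le_one.2 (hfmaps ht.2).2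
    _ = volume.restrict Iu A := by simp
    _ = volume (A ∩ Iu) := Measure.restrict_apply hA

include hfmaps hdens in
lemma F_singleton (x : ℝ) : F {x} = 0 := by
  have := F_le_vol hfmaps hdens (A := {x}) (measurableSet_singleton x)
  have h2 : volume ({x} ∩ Iu) = 0 :=
    measure_mono_null (Set.inter_subset_left) (Real.volume_singleton)
  exact le_antisymm (h2 ▸ this) (by simp)

include hFp hFIu in
lemma F_Iic_one : F (Iic 1) = 1 := by
  refine le_antisymm prob_le_one ?_
  rw [← hFIu]
  exact measure_mono (fun x hx => hx.2)

include hFp hFIu in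
lemma qinv_one_mem : qinv F 1 ∈ Iu := by
  have h1 : (1:ℝ) ∈ {x | x ∈ Iu ∧ (1:ℝ) ≤ cdf01 F x} := by
    refine ⟨by norm_num [Iu], ?_⟩
    unfold cdf01
    rw [F_Iic_one hFp hFIu]
    norm_num
  constructor
  · exact le_csInf ⟨1, h1⟩ (fun x hx => hx.1.1)
  · exact csInf_le ⟨0, fun x hx => hx.1.1⟩ h1

include hFp hFIu in
lemma F_Iic_qinv_one : F (Iic (qinv F 1)) = 1 := by
  set S := {x | x ∈ Iu ∧ (1:ℝ) ≤ cdf01 F x} with hS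
  have hne : S.Nonempty := ⟨1, by
    refine ⟨by norm_num [Iu], ?_⟩
    unfold cdf01; rw [F_Iic_one hFp hFIu]; norm_num⟩
  have hbdd : BddBelow S := ⟨0, fun x hx => hx.1.1⟩
  have hmem : ∀ x ∈ S, F (Iic x) = 1 := by
    intro x hx
    refine le_antisymm prob_le_one ?_
    have h2 := hx.2
    unfold cdf01 at h2
    have := ENNReal.ofReal_le_ofReal h2
    rwa [ENNReal.ofReal_one, ENNReal.ofReal_toReal (measure_ne_top F _)] at this
  -- show F (Ioi (qinv F 1)) = 0
  have hIoi : F (Ioi (qinv F 1)) = 0 := by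
    have hcover : Ioi (qinv F 1) ⊆ ⋃ n : ℕ, Ioi (qinv F 1 + 1/(n+1)) := by
      intro x hx
      obtain ⟨n, hn⟩ := exists_nat_one_div_lt (sub_pos.2 (show qinv F 1 < x from hx))
      exact Set.mem_iUnion.2 ⟨n, by simp only [Set.mem_Ioi] at *; linarith⟩
    refine measure_mono_null hcover (measure_iUnion_null fun n => ?_)
    have hpos : (0:ℝ) < 1/(n+1) := by positivity
    obtain ⟨x, hxS, hxlt⟩ := (csInf_lt_iff hbdd hne).1
      (show sInf S < qinv F 1 + 1/(n+1) by unfold qinv; linarith [lt_add_of_pos_right (sInf S) hpos])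
    have : F (Iic x) = 1 := hmem x hxS
    have hsub : Ioi (qinv F 1 + 1/(n+1)) ⊆ (Iic x)ᶜ := by
      intro y hy
      simp only [Set.mem_Ioi] at hy
      simp only [Set.mem_compl_iff, Set.mem_Iic, not_le]
      linarith
    refine measure_mono_null hsub ?_
    rw [measure_compl measurableSet_Iic (measure_ne_top F _), this, measure_univ, tsub_self]
  have hc : F ((Iic (qinv F 1))ᶜ) = 0 := by rw [compl_Iic]; exact hIoi
  exact (prob_compl_eq_zero_iff (μ := F) (s := Iic (qinv F 1)) measurableSet_Iic).1 hc

end Fprops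

def g0 (f : ℝ → ℝ) : ℝ → ℝ := fun t => if t ≤ 0 then 0 else if 1 ≤ t then f 1 else t * f t

def fm (f : ℝ → ℝ) : ℝ → ℝ := fun t => if t = 0 then f 0 else g0 f t / t

section dens
variable {f : ℝ → ℝ} (hfmaps : MapsTo f Iu Iu)
  (hmono : MonotoneOn (fun t => t * f t) Iu)

lemma g0_eqOn : ∀ t ∈ Iu, g0 f t = t * f t := by
  intro t ht
  unfold g0
  rcases eq_or_lt_of_le ht.1 with h0 | h0
  · simp [← h0]
  · rcases eq_or_lt_of_le ht.2 with h1 | h1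
    · simp [h1, not_le.2 h0, h1.symm ▸ le_refl (1:ℝ)]
    · simp [not_le.2 h0, not_le.2 h1]

include hfmaps hmono in
lemma g0_mono : Monotone (g0 f) := by
  have hnn : ∀ t ∈ Iu, 0 ≤ t * f t := fun t ht => mul_nonneg ht.1 (hfmaps ht).1
  have h1Iu : (1:ℝ) ∈ Iu := by norm_num [Iu]
  intro a b hab
  unfold g0
  by_cases ha0 : a ≤ 0
  · simp only [if_pos ha0]
    by_cases hb0 : b ≤ 0
    · simp [hb0]
    · simp only [if_neg hb0]
      by_cases hb1 : 1 ≤ b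
      · simp only [if_pos hb1]; simpa using hnn 1 h1Iu
      · simp only [if_neg hb1]
        exact hnn b ⟨(not_le.1 hb0).le, (not_le.1 hb1).le⟩
  · have hb0 : ¬ b ≤ 0 := fun h => ha0 (hab.trans h)
    simp only [if_neg ha0, if_neg hb0]
    by_cases ha1 : 1 ≤ a
    · have hb1 : 1 ≤ b := ha1.trans hab
      simp [ha1, hb1]
    · simp only [if_neg ha1]
      by_cases hb1 : 1 ≤ b
      · simp only [if_pos hb1]
        have := hmono ⟨(not_le.1 ha0).le, (not_le.1 ha1).le⟩ h1Iu (not_le.1 ha1).le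
        simpa using this
      · simp only [if_neg hb1]
        exact hmono ⟨(not_le.1 ha0).le, (not_le.1 ha1).le⟩
          ⟨(not_le.1 hb0).le, (not_le.1 hb1).le⟩ hab

lemma fm_eqOn : ∀ t ∈ Iu, fm f t = f t := by
  intro t ht
  unfold fm
  split_ifs with h0
  · rw [h0]
  · rw [g0_eqOn t ht, mul_comm, mul_div_assoc, div_self h0, mul_one]

include hfmaps hmono in
lemma fm_meas : Measurable (fm f) := by
  have hg := (g0_mono hfmaps hmono).measurable
  unfold fm
  exact Measurable.ite (by simpa using MeasurableSet.singleton (0:ℝ)) measurable_const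
    (hg.div measurable_id)

end dens

section FTC
variable {F : Measure ℝ} {f : ℝ → ℝ}
  (hFp : IsProbabilityMeasure F)
  (hfmaps : MapsTo f Iu Iu)
  (hmono : MonotoneOn (fun t => t * f t) Iu)
  (hdens : F = (volume.restrict Iu).withDensity (fun t => ENNReal.ofReal (f t)))

include hfmaps hmono in
lemma f_integrable {s : Set ℝ} (hsm : MeasurableSet s) (hsub : s ⊆ Iu) :
    Integrable f (volume.restrict s) := by
  haveI : IsFiniteMeasure (volume.restrict s) := by
    constructor
    rw [Measure.restrict_apply_univ]
    refine lt_of_le_of_lt (measure_mono hsub) ?_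
    simp [Iu, Real.volume_Icc]
  have haesm : AEStronglyMeasurable f (volume.restrict s) := by
    refine ((fm_meas hfmaps hmono).aestronglyMeasurable).congr ?_
    filter_upwards [ae_restrict_mem hsm] with t ht
    exact fm_eqOn t (hsub ht)
  refine (integrable_const (1:ℝ)).mono' haesm ?_
  filter_upwards [ae_restrict_mem hsm] with t ht
  rw [Real.norm_eq_abs, abs_of_nonneg (hfmaps (hsub ht)).1]
  exact (hfmaps (hsub ht)).2

include hFp hfmaps hmono hdens in
lemma cdf_diff {a b : ℝ} (ha : 0 ≤ a) (hab : a ≤ b) (hb : b ≤ 1) :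
    cdf01 F b - cdf01 F a = ∫ t in a..b, f t := by
  have hsub : Ioc a b ⊆ Iu := fun t ht => ⟨ha.trans ht.1.le, ht.2.trans hb⟩
  have hnn : 0 ≤ᵐ[volume.restrict (Ioc a b)] f := by
    filter_upwards [ae_restrict_mem measurableSet_Ioc] with t ht
    exact (hfmaps (hsub ht)).1
  have hint : Integrable f (volume.restrict (Ioc a b)) :=
    f_integrable hfmaps hmono measurableSet_Ioc hsub
  have hmeq : F (Ioc a b) = ENNReal.ofReal (∫ t in Ioc a b, f t) := by
    rw [hdens, withDensity_apply _ measurableSet_Ioc,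
      Measure.restrict_restrict measurableSet_Ioc,
      Set.inter_eq_self_of_subset_left hsub,
      ← ofReal_integral_eq_lintegral_ofReal hint hnn]
  have hun : F (Iic b) = F (Iic a) + F (Ioc a b) := by
    rw [← measure_union (by exact Iic_disjoint_Ioc (le_refl a)) measurableSet_Ioc,
      Iic_union_Ioc_eq_Iic hab]
  have hnn2 : 0 ≤ ∫ t in Ioc a b, f t := setIntegral_nonneg measurableSet_Ioc
    (fun t ht => (hfmaps (hsub ht)).1)
  unfold cdf01
  rw [hun, ENNReal.toReal_add (measure_ne_top F _) (measure_ne_top F _), hmeq,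
    ENNReal.toReal_ofReal hnn2, intervalIntegral.integral_of_le hab]
  ring

include hFp hfmaps hmono hdens in
lemma K4 {c : ℝ} (hc : c ∈ Iu) :
    ∫ t in (0:ℝ)..c, g0 f t = c * cdf01 F c - ∫ t in (0:ℝ)..c, cdf01 F t := by
  have hsub : Ioc 0 c ⊆ Iu := fun t ht => ⟨ht.1.le, ht.2.trans hc.2⟩
  have hfm := fm_meas hfmaps hmono
  set μc := volume.restrict (Ioc 0 c) with hμc
  -- step 1: interval to set integral, and replace g0 by t * fm t
  have step1 : ∫ t in (0:ℝ)..c, g0 f t = ∫ t, t * fm f t ∂μc := by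
    rw [intervalIntegral.integral_of_le hc.1]
    refine setIntegral_congr_fun measurableSet_Ioc (fun t ht => ?_)
    rw [g0_eqOn t (hsub ht), fm_eqOn t (hsub ht)]
  -- step 2: t = ∫ s, ind (s < t) dμc for t ∈ Ioc 0 c
  have step2 : ∀ t ∈ Ioc 0 c, (∫ s, (if s < t then (1:ℝ) else 0) ∂μc) = t := by
    intro t ht
    have : (fun s => if s < t then (1:ℝ) else 0) = (Iio t).indicator (fun _ => (1:ℝ)) := by
      funext s; by_cases h : s < t <;> simp [Set.indicator, h]
    rw [this, MeasureTheory.integral_indicator_const _ measurableSet_Iio]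
    have : μc (Iio t) = ENNReal.ofReal t := by
      rw [hμc, Measure.restrict_apply measurableSet_Iio]
      have : Iio t ∩ Ioc 0 c = Ioo 0 t := by
        ext s
        simp only [Set.mem_inter_iff, Set.mem_Iio, Set.mem_Ioc, Set.mem_Ioo]
        constructor
        · rintro ⟨h1, h2, h3⟩; exact ⟨h2, h1⟩
        · rintro ⟨h1, h2⟩; exact ⟨h2, h1, by linarith [ht.2]⟩
      rw [this, Real.volume_Ioo, sub_zero]
    rw [measureReal_def, this, smul_eq_mul, mul_one, ENNReal.toReal_ofReal ht.1.le]
  -- step 3: Fubini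
  have hintg : Integrable (fun p : ℝ × ℝ => (if p.1 < p.2 then (1:ℝ) else 0) * fm f p.2)
      (μc.prod μc) := by
    have hm : Measurable (fun p : ℝ × ℝ => (if p.1 < p.2 then (1:ℝ) else 0) * fm f p.2) := by
      refine Measurable.mul ?_ (hfm.comp measurable_snd)
      exact Measurable.ite (measurableSet_lt measurable_fst measurable_snd)
        measurable_const measurable_const
    refine (integrable_const (1:ℝ)).mono' hm.aestronglyMeasurable ?_
    rw [hμc, Measure.prod_restrict]
    filter_upwards [ae_restrict_mem (measurableSet_Ioc.prod measurableSet_Ioc)] with p hp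
    have h2 : p.2 ∈ Iu := hsub hp.2
    rw [Real.norm_eq_abs, abs_mul, fm_eqOn p.2 h2]
    have hb1 : |(if p.1 < p.2 then (1:ℝ) else 0)| ≤ 1 := by split_ifs <;> norm_num
    have hb2 : |f p.2| ≤ 1 := by
      rw [abs_of_nonneg (hfmaps h2).1]; exact (hfmaps h2).2
    calc |(if p.1 < p.2 then (1:ℝ) else 0)| * |f p.2| ≤ 1 * 1 :=
        mul_le_mul hb1 hb2 (abs_nonneg _) (by norm_num)
      _ = 1 := by norm_num
  have swap : ∫ t, (∫ s, (if s < t then (1:ℝ) else 0) ∂μc) * fm f t ∂μc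
      = ∫ s, ∫ t, (if s < t then (1:ℝ) else 0) * fm f t ∂μc ∂μc := by
    calc ∫ t, (∫ s, (if s < t then (1:ℝ) else 0) ∂μc) * fm f t ∂μc
        = ∫ t, ∫ s, (if s < t then (1:ℝ) else 0) * fm f t ∂μc ∂μc := by
          refine integral_congr_ae (Filter.Eventually.of_forall fun t => ?_)
          exact (MeasureTheory.integral_mul_const (fm f t) _).symm
      _ = ∫ s, ∫ t, (if s < t then (1:ℝ) else 0) * fm f t ∂μc ∂μc :=
          (MeasureTheory.integral_integral_swap (μ := μc) (ν := μc)
            (f := fun s t => (if s < t then (1:ℝ) else 0) * fm f t) hintg).symm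
  -- step 4: inner integral equals Φ c − Φ s
  have step4 : ∀ s ∈ Ioc 0 c, ∫ t, (if s < t then (1:ℝ) else 0) * fm f t ∂μc
      = cdf01 F c - cdf01 F s := by
    intro s hs
    have heq : (fun t => (if s < t then (1:ℝ) else 0) * fm f t)
        = (Ioi s).indicator (fm f) := by
      funext t; by_cases h : s < t <;> simp [Set.indicator, Set.mem_Ioi, h]
    rw [heq, integral_indicator measurableSet_Ioi, hμc,
      Measure.restrict_restrict measurableSet_Ioi]
    have hset : Ioi s ∩ Ioc 0 c = Ioc s c := by
      ext t
      simp only [Set.mem_inter_iff, Set.mem_Ioi, Set.mem_Ioc]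
      exact ⟨fun ⟨h1, _, h3⟩ => ⟨h1, h3⟩, fun ⟨h1, h2⟩ => ⟨h1, hs.1.trans h1, h2⟩⟩
    rw [hset]
    have : ∫ t in Ioc s c, fm f t = ∫ t in Ioc s c, f t := by
      refine setIntegral_congr_fun measurableSet_Ioc (fun t ht => ?_)
      exact fm_eqOn t ⟨(hs.1.trans ht.1).le, ht.2.trans hc.2⟩
    rw [this, ← intervalIntegral.integral_of_le hs.2,
      ← cdf_diff hFp hfmaps hmono hdens hs.1.le hs.2 hc.2]
  -- assemble
  have hΦint : IntervalIntegrable (cdf01 F) volume 0 c := by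
    have : Monotone (cdf01 F) := fun x y hxy =>
      ENNReal.toReal_mono (measure_ne_top F _) (measure_mono (Iic_subset_Iic.2 hxy))
    exact this.intervalIntegrable
  rw [step1]
  have : ∫ t, t * fm f t ∂μc = ∫ t, (∫ s, (if s < t then (1:ℝ) else 0) ∂μc) * fm f t ∂μc := by
    refine setIntegral_congr_fun measurableSet_Ioc (fun t ht => ?_)
    rw [step2 t ht]
  rw [this, swap]
  have : ∫ s, ∫ t, (if s < t then (1:ℝ) else 0) * fm f t ∂μc ∂μc
      = ∫ s in Ioc 0 c, (cdf01 F c - cdf01 F s) := by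
    refine setIntegral_congr_fun measurableSet_Ioc (fun s hs => ?_)
    exact step4 s hs
  rw [this, ← intervalIntegral.integral_of_le hc.1,
    intervalIntegral.integral_sub intervalIntegrable_const hΦint,
    intervalIntegral.integral_const]
  simp [mul_comm]

end FTC

section layer
variable {F : Measure ℝ} (hFp : IsProbabilityMeasure F) (hFIu : F Iu = 1)

include hFp in
lemma F_Ioi_toReal (t : ℝ) : (F (Ioi t)).toReal = 1 - cdf01 F t := by
  have h := measure_compl (μ := F) (s := Iic t) measurableSet_Iic (measure_ne_top F _)
  rw [compl_Iic, measure_univ] at h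
  rw [h, ENNReal.toReal_sub_of_le prob_le_one ENNReal.one_ne_top, ENNReal.toReal_one]
  rfl

include hFp in
lemma cdf_mono : Monotone (cdf01 F) := fun x y hxy =>
  ENNReal.toReal_mono (measure_ne_top F _) (measure_mono (Iic_subset_Iic.2 hxy))

lemma cdf_nonneg (t : ℝ) : 0 ≤ cdf01 F t := ENNReal.toReal_nonneg

include hFp in
lemma cdf_le_one (t : ℝ) : cdf01 F t ≤ 1 := by
  have : F (Iic t) ≤ 1 := prob_le_one
  simpa [cdf01] using ENNReal.toReal_mono ENNReal.one_ne_top this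

include hFp in
lemma psi_intInt (a b : ℝ) : IntervalIntegrable (fun t => 1 - cdf01 F t) volume a b :=
  (intervalIntegrable_const (c := (1:ℝ))).sub (cdf_mono hFp).intervalIntegrable

include hFp hFIu in
/-- layer cake: E[(v-a)^+] = ∫_a^1 (1 - Φ) -/
lemma T_int {a : ℝ} (ha : a ∈ Iu) :
    ∫ v, max (v - a) 0 ∂F = ∫ t in a..(1:ℝ), (1 - cdf01 F t) := by
  set μa := volume.restrict (Ioc a 1) with hμa
  haveI : IsFiniteMeasure μa := by
    constructor
    rw [Measure.restrict_apply_univ]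
    simp [Real.volume_Ioc]
  have hpt : ∀ v ∈ Iu, max (v - a) 0 = ∫ t, (if t < v then (1:ℝ) else 0) ∂μa := by
    intro v hv
    have h1 : (fun t => if t < v then (1:ℝ) else 0) = (Iio v).indicator (fun _ => (1:ℝ)) := by
      funext t; by_cases h : t < v <;> simp [Set.indicator, h]
    rw [h1, MeasureTheory.integral_indicator_const _ measurableSet_Iio]
    have hset : Iio v ∩ Ioc a 1 = Ioo a v := by
      ext t
      simp only [Set.mem_inter_iff, Set.mem_Iio, Set.mem_Ioc, Set.mem_Ioo]
      constructor
      · rintro ⟨h1, h2, h3⟩; exact ⟨h2, h1⟩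
      · rintro ⟨h1, h2⟩; exact ⟨h2, h1, by linarith [hv.2]⟩
    rw [hμa, measureReal_def, Measure.restrict_apply measurableSet_Iio, hset, Real.volume_Ioo, smul_eq_mul,
      mul_one]
    rcases le_or_gt v a with h | h
    · rw [ENNReal.ofReal_of_nonpos (by linarith), max_eq_right (by linarith)]
      simp
    · rw [ENNReal.toReal_ofReal (by linarith), max_eq_left (by linarith)]
  have hswap : ∫ v, ∫ t, (if t < v then (1:ℝ) else 0) ∂μa ∂F
      = ∫ t, ∫ v, (if t < v then (1:ℝ) else 0) ∂F ∂μa := by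
    refine MeasureTheory.integral_integral_swap (μ := F) (ν := μa)
      (f := fun v t => if t < v then (1:ℝ) else 0) ?_
    have hm : Measurable (fun p : ℝ × ℝ => if p.2 < p.1 then (1:ℝ) else 0) :=
      Measurable.ite (measurableSet_lt measurable_snd measurable_fst)
        measurable_const measurable_const
    refine (integrable_const (1:ℝ)).mono' hm.aestronglyMeasurable ?_
    refine Filter.Eventually.of_forall (fun p => ?_)
    rw [Function.uncurry, Real.norm_eq_abs]
    split_ifs <;> norm_num
  have hinner : ∀ t : ℝ, ∫ v, (if t < v then (1:ℝ) else 0) ∂F = 1 - cdf01 F t := by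
    intro t
    have h1 : (fun v => if t < v then (1:ℝ) else 0) = (Ioi t).indicator (fun _ => (1:ℝ)) := by
      funext v; by_cases h : t < v <;> simp [Set.indicator, h]
    rw [h1, MeasureTheory.integral_indicator_const _ measurableSet_Ioi, smul_eq_mul, mul_one,
      measureReal_def, F_Ioi_toReal hFp]
  calc ∫ v, max (v - a) 0 ∂F
      = ∫ v, ∫ t, (if t < v then (1:ℝ) else 0) ∂μa ∂F := by
        refine integral_congr_ae ?_
        filter_upwards [ae_mem_Iu hFp hFIu] with v hv using hpt v hv
    _ = ∫ t, ∫ v, (if t < v then (1:ℝ) else 0) ∂F ∂μa := hswap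
    _ = ∫ t, (1 - cdf01 F t) ∂μa := by
        refine integral_congr_ae (Filter.Eventually.of_forall fun t => hinner t)
    _ = ∫ t in a..(1:ℝ), (1 - cdf01 F t) := by
        rw [hμa, intervalIntegral.integral_of_le ha.2]

include hFp hFIu in
lemma EV_int : ∫ v, v ∂F = ∫ t in (0:ℝ)..1, (1 - cdf01 F t) := by
  have h0 : (0:ℝ) ∈ Iu := by norm_num [Iu]
  rw [← T_int hFp hFIu h0]
  refine integral_congr_ae ?_
  filter_upwards [ae_mem_Iu hFp hFIu] with v hv
  rw [sub_zero, max_eq_left hv.1]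

include hFp hFIu in
lemma K3 {c : ℝ} (hc : c ∈ Iu) (hatom : F {c} = 0) :
    ∫ v, v * (if c ≤ v then 1 else 0) ∂F
      = c * (1 - cdf01 F c) + ∫ t in c..(1:ℝ), (1 - cdf01 F t) := by
  have hFIci : (F (Ici c)).toReal = 1 - cdf01 F c := by
    have h1 : F (Ici c) = F (Ioi c) := by
      refine le_antisymm ?_ (measure_mono Ioi_subset_Ici_self)
      have : Ici c = {c} ∪ Ioi c := by
        ext x; simp only [Set.mem_Ici, Set.mem_union, Set.mem_singleton_iff, Set.mem_Ioi]
        constructor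
        · intro h; rcases eq_or_lt_of_le h with h' | h'; exact Or.inl h'.symm; exact Or.inr h'
        · rintro (rfl | h); exact le_refl _; exact h.le
      rw [this]
      refine (measure_union_le _ _).trans ?_
      rw [hatom, zero_add]
    rw [h1, F_Ioi_toReal hFp]
  have hpt : ∀ v : ℝ, v * (if c ≤ v then 1 else 0)
      = c * (if c ≤ v then 1 else 0) + max (v - c) 0 := by
    intro v
    by_cases h : c ≤ v
    · simp only [if_pos h, mul_one]
      rw [max_eq_left (by linarith)]; ring
    · simp only [if_neg h, mul_zero]
      rw [max_eq_right (by linarith [not_le.1 h])]; ring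
  have hind : (fun v => (if c ≤ v then (1:ℝ) else 0)) = (Ici c).indicator (fun _ => (1:ℝ)) := by
    funext v; by_cases h : c ≤ v <;> simp [Set.indicator, h]
  have hint0 : Integrable (fun v => (if c ≤ v then (1:ℝ) else 0)) F := by
    rw [hind]
    exact ((integrable_indicator_iff measurableSet_Ici).2
      (integrableOn_const (measure_ne_top F _)))
  have hint1 : Integrable (fun v => c * (if c ≤ v then (1:ℝ) else 0)) F := hint0.const_mul c
  have hint2 : Integrable (fun v => max (v - c) 0) F := by
    refine (integrable_const (1:ℝ)).mono' ?_ ?_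
    · exact ((continuous_id.sub continuous_const).max continuous_const).aestronglyMeasurable
    · filter_upwards [ae_mem_Iu hFp hFIu] with v hv
      rw [Real.norm_eq_abs, abs_of_nonneg (le_max_right _ _)]
      rcases le_or_gt v c with h | h
      · rw [max_eq_right (by linarith)]; norm_num
      · rw [max_eq_left (by linarith)]; linarith [hv.2, hc.1]
  calc ∫ v, v * (if c ≤ v then 1 else 0) ∂F
      = ∫ v, (c * (if c ≤ v then 1 else 0) + max (v - c) 0) ∂F := by
        refine integral_congr_ae (Filter.Eventually.of_forall fun v => hpt v)
    _ = (∫ v, c * (if c ≤ v then 1 else 0) ∂F) + ∫ v, max (v - c) 0 ∂F :=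
        integral_add hint1 hint2
    _ = c * (1 - cdf01 F c) + ∫ t in c..(1:ℝ), (1 - cdf01 F t) := by
        rw [T_int hFp hFIu hc]
        congr 1
        rw [MeasureTheory.integral_const_mul, hind,
          MeasureTheory.integral_indicator_const _ measurableSet_Ici, smul_eq_mul, mul_one,
          measureReal_def, hFIci]

end layer

section core
variable {F : Measure ℝ} {f : ℝ → ℝ}
  (hFp : IsProbabilityMeasure F) (hFIu : F Iu = 1)
  (hfmaps : MapsTo f Iu Iu)
  (hmono : MonotoneOn (fun t => t * f t) Iu)
  (hdens : F = (volume.restrict Iu).withDensity (fun t => ENNReal.ofReal (f t)))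

include hFp hFIu in
lemma T_integrable {a : ℝ} (ha : 0 ≤ a) : Integrable (fun v => max (v - a) 0) F := by
  refine (integrable_const (1:ℝ)).mono' ?_ ?_
  · exact ((continuous_id.sub continuous_const).max continuous_const).aestronglyMeasurable
  · filter_upwards [ae_mem_Iu hFp hFIu] with v hv
    rw [Real.norm_eq_abs, abs_of_nonneg (le_max_right _ _)]
    rcases le_or_gt v a with h | h
    · rw [max_eq_right (by linarith)]; norm_num
    · rw [max_eq_left (by linarith)]; linarith [hv.2]

include hFp hFIu in
lemma T_anti {a a' : ℝ} (ha : 0 ≤ a) (haa : a ≤ a') :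
    ∫ v, max (v - a') 0 ∂F ≤ ∫ v, max (v - a) 0 ∂F := by
  refine integral_mono (T_integrable hFp hFIu (ha.trans haa)) (T_integrable hFp hFIu ha) ?_
  intro v
  exact max_le_max (by linarith) (le_refl 0)

include hFp hfmaps hdens in
lemma F_Ici_one_zero : F (Ici 1) = 0 := by
  have h1 : Ici (1:ℝ) = {1} ∪ Ioi 1 := by
    ext x; simp only [Set.mem_Ici, Set.mem_union, Set.mem_singleton_iff, Set.mem_Ioi]
    constructor
    · intro h; rcases eq_or_lt_of_le h with h' | h'; exact Or.inl h'.symm; exact Or.inr h'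
    · rintro (rfl | h); exact le_refl _; exact h.le
  have h2 : F (Ioi 1) = 0 := by
    have := F_le_vol hfmaps hdens (A := Ioi 1) measurableSet_Ioi
    have he : Ioi (1:ℝ) ∩ Iu = ∅ := by
      rw [Set.eq_empty_iff_forall_notMem]
      rintro x ⟨hx1, hx2⟩
      rw [Set.mem_Ioi] at hx1
      exact absurd hx2.2 (not_le.2 hx1)
    rw [he] at this
    simpa using this
  rw [h1]
  refine le_antisymm ((measure_union_le _ _).trans ?_) (by simp)
  rw [F_singleton hfmaps hdens, h2, zero_add]

include hFp hFIu hfmaps hmono hdens in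
/-- The core inequality -/
lemma core_ineq {α : ℝ} (hα : α ∈ Iu) {h : ℝ} (hh : h ∈ Iu) :
    (∫ v, max (v - h) 0 ∂F) - (∫ v, (v - α * v) * (if h ≤ α * v then 1 else 0) ∂F)
      ≤ max (α * ∫ v, v ∂F) (∫ v, max (v - α * qinv F 1) 0 ∂F) := by
  have hvbar := qinv_one_mem hFp hFIu
  have hAtom := F_singleton hfmaps hdens
  have hIci1 := F_Ici_one_zero hFp hfmaps hdens
  set vb := qinv F 1 with hvb
  -- reduce RHS second arm: T α ≤ T (α * vb)
  have hTle : ∫ v, max (v - α) 0 ∂F ≤ ∫ v, max (v - α * vb) 0 ∂F :=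
    T_anti hFp hFIu (mul_nonneg hα.1 hvbar.1)
      (by nlinarith [hα.1, hα.2, hvbar.1, hvbar.2])
  have hEV : (0:ℝ) ≤ ∫ v, v ∂F := by
    refine integral_nonneg_of_ae ?_
    filter_upwards [ae_mem_Iu hFp hFIu] with v hv using hv.1
  -- case α = 0
  rcases eq_or_lt_of_le hα.1 with hα0 | hα0
  · -- α = 0
    rw [← hα0]
    simp only [zero_mul, sub_zero]
    rcases eq_or_lt_of_le hh.1 with hh0 | hh0
    · -- h = 0
      rw [← hh0]
      simp only [sub_zero]
      have h1 : ∫ v, max v 0 ∂F = ∫ v, v ∂F := by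
        refine integral_congr_ae ?_
        filter_upwards [ae_mem_Iu hFp hFIu] with v hv using max_eq_left hv.1
      have h2 : ∫ v, v * (if (0:ℝ) ≤ 0 then (1:ℝ) else 0) ∂F = ∫ v, v ∂F := by
        refine integral_congr_ae (Filter.Eventually.of_forall fun v => ?_)
        simp
      rw [h1, h2, sub_self]
      exact le_max_of_le_left (le_refl 0)
    · -- h > 0
      have h2 : ∫ v, v * (if h ≤ (0:ℝ) then (1:ℝ) else 0) ∂F = 0 := by
        refine Eq.trans (integral_congr_ae (Filter.Eventually.of_forall fun v => ?_))
          (integral_zero _ _)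
        show v * (if h ≤ (0:ℝ) then (1:ℝ) else 0) = 0
        rw [if_neg (not_le.2 hh0), mul_zero]
      rw [h2, sub_zero]
      refine le_max_of_le_right ?_
      have := T_anti hFp hFIu (le_refl (0:ℝ)) hh.1
      simpa using this
  -- α > 0
  · have hc0 : 0 ≤ h / α := div_nonneg hh.1 hα0.le
    have hUrw : ∫ v, (v - α * v) * (if h ≤ α * v then 1 else 0) ∂F
        = (1 - α) * ∫ v, v * (if h / α ≤ v then 1 else 0) ∂F := by
      rw [← MeasureTheory.integral_const_mul]
      refine integral_congr_ae (Filter.Eventually.of_forall fun v => ?_)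
      have hiff : h ≤ α * v ↔ h / α ≤ v := by
        rw [div_le_iff₀ hα0, mul_comm]
      show (v - α * v) * (if h ≤ α * v then 1 else 0)
          = (1 - α) * (v * (if h / α ≤ v then 1 else 0))
      by_cases hcv : h / α ≤ v
      · rw [if_pos (hiff.2 hcv), if_pos hcv]; ring
      · rw [if_neg (fun hx => hcv (hiff.1 hx)), if_neg hcv]; ring
    rcases le_or_gt α h with hαh | hhα
    · -- h ≥ α : strategy never wins (a.e.), regret integrand is T h
      have hc1 : (1:ℝ) ≤ h / α := (one_le_div hα0).2 hαh
      have hmeas0 : F (Ici (h / α)) = 0 :=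
        le_antisymm ((measure_mono (Ici_subset_Ici.2 hc1)).trans hIci1.le) (by simp)
      have hzero : ∫ v, v * (if h / α ≤ v then 1 else 0) ∂F = 0 := by
        have hae : ∀ᵐ v ∂F, ¬ (h / α ≤ v) := by
          rw [ae_iff]
          simpa using (show F {a | h / α ≤ a} = 0 from hmeas0)
        refine Eq.trans (integral_congr_ae ?_) (integral_zero _ _)
        filter_upwards [hae] with v hv
        show v * (if h / α ≤ v then (1:ℝ) else 0) = 0
        rw [if_neg hv, mul_zero]
      rw [hUrw, hzero, mul_zero, sub_zero]
      exact le_max_of_le_right ((T_anti hFp hFIu hα.1 hαh).trans hTle)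
    · -- 0 ≤ h < α : the convexity argument
      have hc1 : h / α < 1 := (div_lt_one hα0).2 hhα
      have hcIu : h / α ∈ Iu := ⟨hc0, hc1.le⟩
      have hcoef : 0 ≤ (1 - α) / α := div_nonneg (by linarith [hα.2]) hα0.le
      have hgm : Monotone (fun u : ℝ => g0 f (u / α)) := fun x y hxy =>
        g0_mono hfmaps hmono ((div_le_div_iff_of_pos_right hα0).2 hxy)
      have hρm : Monotone (fun u => (cdf01 F u - 1) + ((1 - α) / α) * g0 f (u / α)) := by
        refine Monotone.add (fun x y hxy => ?_) (fun x y hxy => ?_)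
        · simpa using sub_le_sub_right (cdf_mono hFp hxy) 1
        · exact mul_le_mul_of_nonneg_left (hgm hxy) hcoef
      have hΦint : ∀ a b : ℝ, IntervalIntegrable (cdf01 F) volume a b :=
        fun a b => (cdf_mono hFp).intervalIntegrable
      have hΦ1 : cdf01 F 1 = 1 := by
        unfold cdf01; rw [F_Iic_one hFp hFIu]; simp
      -- the integral of ρ from 0 to x
      have hsub : ∀ x : ℝ, x / α ∈ Iu →
          ∫ u in (0:ℝ)..x, ((cdf01 F u - 1) + ((1 - α) / α) * g0 f (u / α))
          = (∫ u in (0:ℝ)..x, (cdf01 F u - 1))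
            + (1 - α) * ((x / α) * cdf01 F (x / α) - ∫ t in (0:ℝ)..(x / α), cdf01 F t) := by
        intro x hxIu
        rw [intervalIntegral.integral_add ((hΦint 0 x).sub intervalIntegrable_const)
          ((hgm.intervalIntegrable).const_mul _), intervalIntegral.integral_const_mul]
        congr 1
        have hcomp : ∫ u in (0:ℝ)..x, g0 f (u / α) = α * ∫ t in (0:ℝ)..(x / α), g0 f t := by
          have := intervalIntegral.integral_comp_div (a := (0:ℝ)) (b := x) (c := α)
            (f := g0 f) hα0.ne'
          simp only [zero_div] at this
          rw [this, smul_eq_mul]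
        rw [hcomp, K4 hFp hfmaps hmono hdens hxIu]
        field_simp
      have hneg : ∀ x : ℝ, ∫ u in (0:ℝ)..x, (cdf01 F u - 1)
          = - ∫ u in (0:ℝ)..x, (1 - cdf01 F u) := by
        intro x
        rw [← intervalIntegral.integral_neg]
        congr 1; funext u; ring
      have hConv : ∀ y : ℝ, ∫ t in (0:ℝ)..y, cdf01 F t
          = y - ∫ t in (0:ℝ)..y, (1 - cdf01 F t) := by
        intro y
        have h1 : ∫ t in (0:ℝ)..y, (1 - cdf01 F t)
            = y - ∫ t in (0:ℝ)..y, cdf01 F t := by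
          rw [intervalIntegral.integral_sub intervalIntegrable_const (hΦint 0 y)]
          simp
        linarith
      have hadd : ∀ x : ℝ, (∫ t in (0:ℝ)..x, (1 - cdf01 F t)) + ∫ t in x..1, (1 - cdf01 F t)
          = ∫ t in (0:ℝ)..1, (1 - cdf01 F t) := fun x =>
        intervalIntegral.integral_add_adjacent_intervals (psi_intInt hFp 0 x) (psi_intInt hFp x 1)
      -- assembly
      have hmono_int := integral_le_max_of_monotone _ hρm hh.1 hhα.le
      have eqh := hadd h
      have eqc := hadd (h / α)
      have eqα := hadd α
      have hρh := hsub h hcIu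
      have hρα : ∫ u in (0:ℝ)..α, ((cdf01 F u - 1) + ((1 - α) / α) * g0 f (u / α))
          = (∫ u in (0:ℝ)..α, (cdf01 F u - 1))
            + (1 - α) * (cdf01 F 1 - ∫ t in (0:ℝ)..1, cdf01 F t) := by
        have := hsub α (by rw [div_self hα0.ne']; norm_num [Iu])
        rw [div_self hα0.ne'] at this
        simpa using this
      rw [hneg h] at hρh
      rw [hneg α, hΦ1, hConv 1] at hρα
      rw [hConv (h / α)] at hρh
      -- identities L1, L2
      have hL1 : (∫ t in h..(1:ℝ), (1 - cdf01 F t))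
          - (1 - α) * ((h / α) * (1 - cdf01 F (h / α)) + ∫ t in (h / α)..(1:ℝ), (1 - cdf01 F t))
          - α * ∫ t in (0:ℝ)..1, (1 - cdf01 F t)
          = ∫ u in (0:ℝ)..h, ((cdf01 F u - 1) + ((1 - α) / α) * g0 f (u / α)) := by
        rw [hρh]
        linear_combination eqh - (1 - α) * eqc
      have hL2 : (∫ t in α..(1:ℝ), (1 - cdf01 F t)) - α * ∫ t in (0:ℝ)..1, (1 - cdf01 F t)
          = ∫ u in (0:ℝ)..α, ((cdf01 F u - 1) + ((1 - α) / α) * g0 f (u / α)) := by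
        rw [hρα]
        linear_combination eqα
      -- rewrite the goal
      rw [hUrw, K3 hFp hFIu hcIu (hAtom _), T_int hFp hFIu hh]
      have hEVr := EV_int hFp hFIu
      have hTα := T_int hFp hFIu hα
      rw [hEVr]
      refine le_trans ?_ (max_le_max (le_refl _) (hTα ▸ hTle))
      -- goal: Ph1 - (1-α)(...) ≤ max (α * P01) (Pα1)
      rw [← hL2] at hmono_int
      rw [← hL1] at hmono_int
      rcases le_total ((∫ t in α..(1:ℝ), (1 - cdf01 F t))
          - α * ∫ t in (0:ℝ)..1, (1 - cdf01 F t)) 0 with hcase | hcase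
      · rw [max_eq_left hcase] at hmono_int
        refine le_max_of_le_left ?_
        linarith
      · rw [max_eq_right hcase] at hmono_int
        refine le_max_of_le_right ?_
        linarith

end core

end Helpers

set_option maxHeartbeats 1000000 in
/-- Proposition: uniform-bid-shading: let `F` have a density
`f : [0,1] → [0,1]` such that `t ↦ t·f(t)` is non-decreasing, and for `α ∈ [0,1]` let
`s_α` be the strategy bidding `α·v` deterministically. Then
`sup_H Reg_F(s_α,H) = max{α·E_F[v], E_F[(v − α·F⁻(1))⁺]}`. -/
theorem uniform_bid_shading_worst_case_regret
    (F : Measure ℝ) (hF : IsProbOn F)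
    (f : ℝ → ℝ) (hfmaps : MapsTo f Iu Iu)
    (hdens : F = (volume.restrict Iu).withDensity (fun t => ENNReal.ofReal (f t)))
    (hmono : MonotoneOn (fun t => t * f t) Iu)
    (α : ℝ) (hα : α ∈ Iu)
    (s : Kernel ℝ ℝ) (hs : IsStrategy s)
    (hshade : ∀ v ∈ Iu, s v = Measure.dirac (α * v)) :
    (⨆ H : {H : Measure ℝ // IsProbOn H}, regret F s H.1)
      = max (α * ∫ v, v ∂F) (∫ v, max (v - α * qinv F 1) 0 ∂F) := by
  obtain ⟨hFp, hFIu⟩ := hF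
  haveI := hFp
  set RHS := max (α * ∫ v, v ∂F) (∫ v, max (v - α * qinv F 1) 0 ∂F) with hRHS
  have hvbIu := qinv_one_mem hFp hFIu
  -- basic strategies
  have h0Iu : (0:ℝ) ∈ Iu := by constructor <;> norm_num
  have hdet0 : IsStrategy (Kernel.deterministic (fun _ : ℝ => (0:ℝ)) measurable_const) :=
    strategy_det measurable_const (fun _ => h0Iu)
  haveI hne : Nonempty {k : Kernel ℝ ℝ // IsStrategy k} :=
    ⟨⟨Kernel.deterministic (fun _ : ℝ => (0:ℝ)) measurable_const, hdet0⟩⟩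
  have hprob0 : IsProbOn (Measure.dirac (0:ℝ)) := by
    refine ⟨inferInstance, ?_⟩
    rw [Measure.dirac_apply' _ msIu]
    simp [h0Iu]
  haveI hneH : Nonempty {H : Measure ℝ // IsProbOn H} := ⟨⟨Measure.dirac 0, hprob0⟩⟩
  -- eUtil bounds
  have hBal : ∀ (H : Measure ℝ), IsProbabilityMeasure H →
      BddAbove (Set.range fun k : {k : Kernel ℝ ℝ // IsStrategy k} => eUtil F k.1 H) := by
    intro H hH
    refine ⟨1, ?_⟩
    rintro x ⟨k, rfl⟩
    exact le_of_abs_le (norm_eUtil_le_one ⟨hFp, hFIu⟩ hH k.2)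
  have hregle : ∀ (H : Measure ℝ), IsProbOn H → regret F s H ≤ 2 := by
    intro H hH
    haveI := hH.1
    unfold regret
    have h1 : (⨆ s' : {k : Kernel ℝ ℝ // IsStrategy k}, eUtil F s'.1 H) ≤ 1 :=
      ciSup_le (fun k => le_of_abs_le (norm_eUtil_le_one ⟨hFp, hFIu⟩ hH.1 k.2))
    have h2 : -1 ≤ eUtil F s H := neg_le_of_abs_le (norm_eUtil_le_one ⟨hFp, hFIu⟩ hH.1 hs)
    linarith
  have hBH : BddAbove (Set.range fun H : {H : Measure ℝ // IsProbOn H} => regret F s H.1) := by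
    refine ⟨2, ?_⟩
    rintro x ⟨H, rfl⟩
    exact hregle H.1 H.2
  -- ===== LOWER BOUND =====
  have hEVnn : (0:ℝ) ≤ ∫ v, v ∂F := by
    refine integral_nonneg_of_ae ?_
    filter_upwards [ae_mem_Iu hFp hFIu] with v hv using hv.1
  have hlow1 : α * ∫ v, v ∂F ≤ ⨆ H : {H : Measure ℝ // IsProbOn H}, regret F s H.1 := by
    refine le_ciSup_of_le hBH ⟨Measure.dirac 0, hprob0⟩ ?_
    -- regret at dirac 0 ≥ α EV
    have hU : eUtil F s (Measure.dirac 0) = (1 - α) * ∫ v, v ∂F := by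
      rw [eUtil_shade ⟨hFp, hFIu⟩ _ hshade, ← MeasureTheory.integral_const_mul]
      refine integral_congr_ae ?_
      filter_upwards [ae_mem_Iu hFp hFIu] with v hv
      have h0m : (0:ℝ) ∈ Iic (α * v) := by
        simp only [Set.mem_Iic]
        exact mul_nonneg hα.1 hv.1
      rw [Measure.dirac_apply' _ measurableSet_Iic, Set.indicator_of_mem h0m]
      simp
      ring
    have hB : ∫ v, v ∂F ≤ ⨆ s' : {k : Kernel ℝ ℝ // IsStrategy k},
        eUtil F s'.1 (Measure.dirac 0) := by
      refine le_ciSup_of_le (hBal _ inferInstance)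
        ⟨Kernel.deterministic (fun _ : ℝ => (0:ℝ)) measurable_const, hdet0⟩ ?_
      rw [eUtil_det]
      refine le_of_eq (integral_congr_ae (Filter.Eventually.of_forall fun v => ?_)).symm
      show (v - 0) * (if (0:ℝ) ≤ 0 then (1:ℝ) else 0) = v
      simp
    unfold regret
    rw [hU]
    have := mul_le_mul_of_nonneg_left hEVnn (by linarith [hα.2] : (0:ℝ) ≤ 1 - α)
    nlinarith [hB]
  have hlow2 : (∫ v, max (v - α * qinv F 1) 0 ∂F)
      ≤ ⨆ H : {H : Measure ℝ // IsProbOn H}, regret F s H.1 := by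
    set S := ⨆ H : {H : Measure ℝ // IsProbOn H}, regret F s H.1 with hS
    have hSnn : 0 ≤ S := le_trans (mul_nonneg hα.1 hEVnn) hlow1
    refine le_of_forall_pos_le_add ?_
    intro ε hε
    rcases le_or_gt (α * qinv F 1 + ε) 1 with hcase | hcase
    · -- use H = dirac (α vb + ε)
      set c := α * qinv F 1 + ε with hc
      have hcpos : 0 < c := add_pos_of_nonneg_of_pos (mul_nonneg hα.1 hvbIu.1) hε
      have hcIu : c ∈ Iu := ⟨hcpos.le, hcase⟩
      have hprobc : IsProbOn (Measure.dirac c) := by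
        refine ⟨inferInstance, ?_⟩
        rw [Measure.dirac_apply' _ msIu]
        simp [hcIu]
      -- the winning strategy
      have hgmeas : Measurable (fun v : ℝ => if c ≤ v then c else 0) :=
        Measurable.ite (measurableSet_le measurable_const measurable_id)
          measurable_const measurable_const
      have hgmaps : ∀ v, (if c ≤ v then c else (0:ℝ)) ∈ Iu := by
        intro v; split_ifs; exact hcIu; exact h0Iu
      have hdetc := strategy_det hgmeas hgmaps
      have hBc : ∫ v, max (v - c) 0 ∂F ≤ ⨆ s' : {k : Kernel ℝ ℝ // IsStrategy k},
          eUtil F s'.1 (Measure.dirac c) := by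
        refine le_ciSup_of_le (hBal _ inferInstance) ⟨_, hdetc⟩ ?_
        rw [eUtil_det]
        refine le_of_eq (integral_congr_ae (Filter.Eventually.of_forall fun v => ?_)).symm
        show (v - (if c ≤ v then c else 0)) * (if c ≤ (if c ≤ v then c else 0) then (1:ℝ) else 0)
            = max (v - c) 0
        by_cases hcv : c ≤ v
        · rw [if_pos hcv, if_pos (le_refl c), mul_one, max_eq_left (by linarith)]
        · rw [if_neg hcv, if_neg (by linarith : ¬ c ≤ (0:ℝ)), mul_zero,
            max_eq_right (by linarith [not_le.1 hcv])]
      have hUc : eUtil F s (Measure.dirac c) = 0 := by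
        rw [eUtil_shade ⟨hFp, hFIu⟩ _ hshade]
        refine Eq.trans (integral_congr_ae ?_) (integral_zero _ _)
        have haele : ∀ᵐ v ∂F, v ≤ qinv F 1 := by
          rw [ae_iff]
          have : {v : ℝ | ¬ v ≤ qinv F 1} = (Iic (qinv F 1))ᶜ := by
            ext v; simp [Set.mem_compl_iff]
          rw [this, measure_compl measurableSet_Iic (measure_ne_top F _),
            F_Iic_qinv_one hFp hFIu, measure_univ, tsub_self]
        filter_upwards [ae_mem_Iu hFp hFIu, haele] with v hv hvle
        have hnm : c ∉ Iic (α * v) := by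
          simp only [Set.mem_Iic, not_le, hc]
          have : α * v ≤ α * qinv F 1 := mul_le_mul_of_nonneg_left hvle hα.1
          linarith
        rw [Measure.dirac_apply' _ measurableSet_Iic, Set.indicator_of_notMem hnm]
        simp
      have hreg : ∫ v, max (v - c) 0 ∂F ≤ regret F s (Measure.dirac c) := by
        unfold regret
        rw [hUc, sub_zero]
        exact hBc
      have hTc : ∫ v, max (v - α * qinv F 1) 0 ∂F - ε ≤ ∫ v, max (v - c) 0 ∂F := by
        have hint1 := T_integrable hFp hFIu (mul_nonneg hα.1 hvbIu.1)
        have hint2 := T_integrable hFp hFIu hcpos.le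
        have hptw : ∀ v : ℝ, max (v - α * qinv F 1) 0 - ε ≤ max (v - c) 0 := by
          intro v
          rcases le_or_gt (v - c) 0 with hvc | hvc
          · rw [max_eq_right hvc]
            have : v - α * qinv F 1 ≤ ε := by rw [hc] at hvc; linarith
            rcases le_or_gt (v - α * qinv F 1) 0 with hh | hh
            · rw [max_eq_right hh]; linarith
            · rw [max_eq_left hh.le]; linarith
          · have hvc' : 0 < v - (α * qinv F 1 + ε) := by rw [hc] at hvc; exact hvc
            rw [max_eq_left hvc.le, max_eq_left (by linarith : (0:ℝ) ≤ v - α * qinv F 1)]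
            rw [hc]; linarith
        calc ∫ v, max (v - α * qinv F 1) 0 ∂F - ε
            = ∫ v, (max (v - α * qinv F 1) 0 - ε) ∂F := by
              rw [integral_sub hint1 (integrable_const ε), integral_const, probReal_univ]
              simp
          _ ≤ ∫ v, max (v - c) 0 ∂F := integral_mono (hint1.sub (integrable_const ε)) hint2 hptw
      have hup : regret F s (Measure.dirac c) ≤ S :=
        le_ciSup hBH ⟨Measure.dirac c, hprobc⟩
      linarith
    · -- α vb + ε > 1 : T(α vb) ≤ ε
      have hTsmall : ∫ v, max (v - α * qinv F 1) 0 ∂F ≤ ε := by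
        have : ∀ᵐ v ∂F, max (v - α * qinv F 1) 0 ≤ ε := by
          filter_upwards [ae_mem_Iu hFp hFIu] with v hv
          rcases le_or_gt (v - α * qinv F 1) 0 with hh | hh
          · rw [max_eq_right hh]; linarith
          · rw [max_eq_left hh.le]; linarith [hv.2]
        calc ∫ v, max (v - α * qinv F 1) 0 ∂F ≤ ∫ _, ε ∂F :=
            integral_mono_ae (T_integrable hFp hFIu (mul_nonneg hα.1 hvbIu.1))
              (integrable_const ε) this
          _ = ε := by rw [integral_const, probReal_univ]; simp
      linarith
  -- ===== UPPER BOUND =====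
  have hup : ∀ H : Measure ℝ, IsProbOn H → regret F s H ≤ RHS := by
    intro H hH
    haveI := hH.1
    -- W0 v = E_H[(v-h)^+]
    have hmaxint : ∀ x : ℝ, Integrable (fun h' => max (x - h') 0) H := by
      intro x
      refine (integrable_const (|x| + 1)).mono'
        ((continuous_const.sub continuous_id).max continuous_const).aestronglyMeasurable ?_
      filter_upwards [ae_mem_Iu hH.1 hH.2] with h' hh'
      rw [Real.norm_eq_abs, abs_of_nonneg (le_max_right _ _)]
      rcases le_or_gt (x - h') 0 with hc | hc
      · rw [max_eq_right hc]; positivity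
      · rw [max_eq_left hc.le]
        have h1 : x ≤ |x| := le_abs_self x
        linarith [hh'.1]
    have hW0nn : ∀ v : ℝ, 0 ≤ ∫ h', max (v - h') 0 ∂H :=
      fun v => integral_nonneg (fun h' => le_max_right _ _)
    have hW0lip : LipschitzWith 1 (fun v => ∫ h', max (v - h') 0 ∂H) := by
      refine LipschitzWith.of_dist_le_mul (fun x y => ?_)
      rw [Real.dist_eq, Real.dist_eq, NNReal.coe_one, one_mul,
        ← integral_sub (hmaxint x) (hmaxint y)]
      calc |∫ h', (max (x - h') 0 - max (y - h') 0) ∂H|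
          ≤ ∫ h', |max (x - h') 0 - max (y - h') 0| ∂H := by
            simpa [Real.norm_eq_abs] using
              norm_integral_le_integral_norm (fun h' => max (x - h') 0 - max (y - h') 0) (μ := H)
        _ ≤ ∫ _, |x - y| ∂H := by
            refine integral_mono ((hmaxint x).sub (hmaxint y)).abs (integrable_const _) ?_
            intro h'
            have h2 := abs_max_sub_max_le_abs (x - h') (y - h') 0
            have h3 : x - h' - (y - h') = x - y := by ring
            rwa [h3] at h2
        _ = |x - y| := by rw [integral_const, probReal_univ]; simp
    have hW0int : Integrable (fun v => ∫ h', max (v - h') 0 ∂H) F := by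
      refine (integrable_const (1:ℝ)).mono'
        (hW0lip.continuous.aestronglyMeasurable) ?_
      filter_upwards [ae_mem_Iu hFp hFIu] with v hv
      rw [Real.norm_eq_abs, abs_of_nonneg (hW0nn v)]
      refine le_trans (integral_mono_ae (hmaxint v) (integrable_const 1) ?_)
        (by rw [integral_const, probReal_univ]; simp)
      filter_upwards [ae_mem_Iu hH.1 hH.2] with h' hh'
      rcases le_or_gt (v - h') 0 with hc | hc
      · rw [max_eq_right hc]; norm_num
      · rw [max_eq_left hc.le]; linarith [hv.2, hh'.1]
    -- benchmark bound: any strategy gets at most ∫ W0 dF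
    have hBW : ∀ k : {k : Kernel ℝ ℝ // IsStrategy k},
        eUtil F k.1 H ≤ ∫ v, ∫ h', max (v - h') 0 ∂H ∂F := by
      rintro ⟨k, hkM, hkIu⟩
      haveI := hkM
      have hstep1 : ∀ (v h : ℝ), ∫ b, util b h v ∂(k v) ≤ max (v - h) 0 := by
        intro v h
        by_cases hib : Integrable (fun b => util b h v) (k v)
        · calc ∫ b, util b h v ∂(k v) ≤ ∫ _, max (v - h) 0 ∂(k v) :=
              integral_mono hib (integrable_const _) (fun b => util_le b h v)
            _ = max (v - h) 0 := by rw [integral_const, probReal_univ]; simp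
        · rw [integral_undef hib]; exact le_max_right _ _
      have hstep2 : ∀ v : ℝ, ∫ h, ∫ b, util b h v ∂(k v) ∂H ≤ ∫ h', max (v - h') 0 ∂H := by
        intro v
        by_cases hih : Integrable (fun h => ∫ b, util b h v ∂(k v)) H
        · exact integral_mono hih (hmaxint v) (fun h => hstep1 v h)
        · rw [integral_undef hih]; exact hW0nn v
      show eUtil F k H ≤ _
      unfold eUtil
      by_cases hiv : Integrable (fun v => ∫ h, ∫ b, util b h v ∂(k v) ∂H) F
      · exact integral_mono hiv hW0int (fun v => hstep2 v)
      · rw [integral_undef hiv]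
        exact integral_nonneg hW0nn
    -- the utility of the shading strategy
    have htoReal_le_one : ∀ A : Set ℝ, (H A).toReal ≤ 1 := by
      intro A
      simpa using ENNReal.toReal_mono ENNReal.one_ne_top (prob_le_one (μ := H) (s := A))
    have hHcdf_meas : Measurable (fun v : ℝ => (H (Iic (α * v))).toReal) := by
      have hmono' : Monotone (fun x : ℝ => (H (Iic x)).toReal) := fun x y hxy =>
        ENNReal.toReal_mono (measure_ne_top H _) (measure_mono (Iic_subset_Iic.2 hxy))
      exact hmono'.measurable.comp (measurable_id.const_mul α)
    have hψint : Integrable (fun v => (v - α * v) * (H (Iic (α * v))).toReal) F := by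
      refine (integrable_const (1:ℝ)).mono'
        (((measurable_id.sub (measurable_id.const_mul α)).mul hHcdf_meas).aestronglyMeasurable) ?_
      filter_upwards [ae_mem_Iu hFp hFIu] with v hv
      rw [Real.norm_eq_abs, abs_mul]
      have h1 : |v - α * v| ≤ 1 := by
        rw [abs_of_nonneg (by nlinarith [hα.1, hα.2, hv.1, hv.2] : (0:ℝ) ≤ v - α * v)]
        nlinarith [hα.1, hα.2, hv.1, hv.2]
      have h2 : |(H (Iic (α * v))).toReal| ≤ 1 := by
        rw [abs_of_nonneg ENNReal.toReal_nonneg]; exact htoReal_le_one _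
      calc |v - α * v| * |(H (Iic (α * v))).toReal| ≤ 1 * 1 :=
          mul_le_mul h1 h2 (abs_nonneg _) (by norm_num)
        _ = 1 := by norm_num
    -- the function φ
    have hφmeas : Measurable (fun p : ℝ × ℝ =>
        max (p.1 - p.2) 0 - (p.1 - α * p.1) * (if p.2 ≤ α * p.1 then (1:ℝ) else 0)) := by
      refine Measurable.sub ?_ ?_
      · exact (measurable_fst.sub measurable_snd).max measurable_const
      · refine Measurable.mul (measurable_fst.sub (measurable_fst.const_mul α)) ?_
        exact Measurable.ite (measurableSet_le measurable_snd (measurable_fst.const_mul α))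
          measurable_const measurable_const
    have haepr : ∀ᵐ p : ℝ × ℝ ∂(F.prod H), p.1 ∈ Iu ∧ p.2 ∈ Iu := by
      have hc : (F.prod H) ((Iu ×ˢ Iu)ᶜ) = 0 := by
        have h1 : (F.prod H) (Iu ×ˢ Iu) = 1 := by
          rw [Measure.prod_prod, hFIu, hH.2, mul_one]
        rw [measure_compl (msIu.prod msIu) (measure_ne_top _ _), h1, measure_univ, tsub_self]
      rw [ae_iff]
      refine measure_mono_null ?_ hc
      intro p hp
      simp only [Set.mem_setOf_eq, not_and] at hp
      simp only [Set.mem_compl_iff, Set.mem_prod, not_and]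
      exact hp
    have hφint : Integrable (fun p : ℝ × ℝ =>
        max (p.1 - p.2) 0 - (p.1 - α * p.1) * (if p.2 ≤ α * p.1 then (1:ℝ) else 0)) (F.prod H) := by
      refine (integrable_const (2:ℝ)).mono' hφmeas.aestronglyMeasurable ?_
      filter_upwards [haepr] with p hp
      obtain ⟨hp1, hp2⟩ := hp
      rw [Real.norm_eq_abs]
      have hb1 : 0 ≤ max (p.1 - p.2) 0 := le_max_right _ _
      have hb2 : max (p.1 - p.2) 0 ≤ 1 := by
        rcases le_or_gt (p.1 - p.2) 0 with hc | hc
        · rw [max_eq_right hc]; norm_num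
        · rw [max_eq_left hc.le]; linarith [hp1.2, hp2.1]
      have hb3 : 0 ≤ (p.1 - α * p.1) * (if p.2 ≤ α * p.1 then (1:ℝ) else 0) := by
        refine mul_nonneg (by nlinarith [hα.1, hα.2, hp1.1, hp1.2]) ?_
        split_ifs <;> norm_num
      have hb4 : (p.1 - α * p.1) * (if p.2 ≤ α * p.1 then (1:ℝ) else 0) ≤ 1 := by
        have hfac : p.1 - α * p.1 ≤ 1 := by nlinarith [hα.1, hα.2, hp1.1, hp1.2]
        split_ifs
        · rwa [mul_one]
        · rw [mul_zero]; norm_num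
      rw [abs_le]
      constructor <;> linarith
    have hswap : ∫ v, ∫ h, (max (v - h) 0
          - (v - α * v) * (if h ≤ α * v then (1:ℝ) else 0)) ∂H ∂F
        = ∫ h, ∫ v, (max (v - h) 0
          - (v - α * v) * (if h ≤ α * v then (1:ℝ) else 0)) ∂F ∂H :=
      MeasureTheory.integral_integral_swap (f := fun v h => max (v - h) 0
        - (v - α * v) * (if h ≤ α * v then (1:ℝ) else 0)) hφint
    have hindint : ∀ v : ℝ, Integrable (fun h => (v - α * v) * (if h ≤ α * v then (1:ℝ) else 0)) H := by
      intro v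
      have hie : (fun h : ℝ => (if h ≤ α * v then (1:ℝ) else 0))
          = (Iic (α * v)).indicator (fun _ => (1:ℝ)) := by
        funext h; by_cases hc : h ≤ α * v <;> simp [Set.indicator, hc]
      have : Integrable (fun h : ℝ => (if h ≤ α * v then (1:ℝ) else 0)) H := by
        rw [hie]
        exact (integrable_indicator_iff measurableSet_Iic).2
          (integrableOn_const (measure_ne_top H _))
      exact this.const_mul _
    have hWU : (∫ v, ∫ h', max (v - h') 0 ∂H ∂F) - eUtil F s H
        = ∫ v, ∫ h, (max (v - h) 0
          - (v - α * v) * (if h ≤ α * v then (1:ℝ) else 0)) ∂H ∂F := by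
      rw [eUtil_shade ⟨hFp, hFIu⟩ H hshade, ← integral_sub hW0int hψint]
      refine integral_congr_ae (Filter.Eventually.of_forall fun v => ?_)
      show (∫ h', max (v - h') 0 ∂H) - (v - α * v) * (H (Iic (α * v))).toReal
          = ∫ h, (max (v - h) 0 - (v - α * v) * (if h ≤ α * v then (1:ℝ) else 0)) ∂H
      rw [integral_sub (hmaxint v) (hindint v)]
      congr 1
      rw [MeasureTheory.integral_const_mul]
      congr 1
      have hie : (fun h : ℝ => (if h ≤ α * v then (1:ℝ) else 0))
          = (Iic (α * v)).indicator (fun _ => (1:ℝ)) := by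
        funext h; by_cases hc : h ≤ α * v <;> simp [Set.indicator, hc]
      rw [hie, MeasureTheory.integral_indicator_const _ measurableSet_Iic]
      simp [measureReal_def]
    have hind2 : ∀ h : ℝ, Integrable (fun v => (v - α * v) * (if h ≤ α * v then (1:ℝ) else 0)) F := by
      intro h
      have hm : Measurable (fun v : ℝ => (v - α * v) * (if h ≤ α * v then (1:ℝ) else 0)) := by
        refine Measurable.mul (measurable_id.sub (measurable_id.const_mul α)) ?_
        exact Measurable.ite (measurableSet_le measurable_const (measurable_id.const_mul α))
          measurable_const measurable_const
      refine (integrable_const (1:ℝ)).mono' hm.aestronglyMeasurable ?_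
      filter_upwards [ae_mem_Iu hFp hFIu] with v hv
      rw [Real.norm_eq_abs, abs_mul]
      have h1 : |v - α * v| ≤ 1 := by
        rw [abs_of_nonneg (by nlinarith [hα.1, hα.2, hv.1, hv.2] : (0:ℝ) ≤ v - α * v)]
        nlinarith [hα.1, hα.2, hv.1, hv.2]
      have h2 : |(if h ≤ α * v then (1:ℝ) else 0)| ≤ 1 := by split_ifs <;> norm_num
      calc |v - α * v| * |(if h ≤ α * v then (1:ℝ) else 0)| ≤ 1 * 1 :=
          mul_le_mul h1 h2 (abs_nonneg _) (by norm_num)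
        _ = 1 := by norm_num
    have hrh : ∀ h ∈ Iu, ∫ v, (max (v - h) 0
        - (v - α * v) * (if h ≤ α * v then (1:ℝ) else 0)) ∂F ≤ RHS := by
      intro h hh
      rw [integral_sub (T_integrable hFp hFIu hh.1) (hind2 h)]
      exact core_ineq hFp hFIu hfmaps hmono hdens hα hh
    have hrint : Integrable (fun h => ∫ v, (max (v - h) 0
        - (v - α * v) * (if h ≤ α * v then (1:ℝ) else 0)) ∂F) H :=
      hφint.integral_prod_right
    have hfinal : ∫ h, ∫ v, (max (v - h) 0
        - (v - α * v) * (if h ≤ α * v then (1:ℝ) else 0)) ∂F ∂H ≤ RHS := by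
      calc ∫ h, ∫ v, (max (v - h) 0
            - (v - α * v) * (if h ≤ α * v then (1:ℝ) else 0)) ∂F ∂H
          ≤ ∫ _, RHS ∂H := by
            refine integral_mono_ae hrint (integrable_const _) ?_
            filter_upwards [ae_mem_Iu hH.1 hH.2] with h hh using hrh h hh
        _ = RHS := by rw [integral_const, probReal_univ]; simp
    unfold regret
    have hB := ciSup_le hBW
    have hkey : (∫ v, ∫ h', max (v - h') 0 ∂H ∂F) - eUtil F s H ≤ RHS := by
      rw [hWU, hswap]; exact hfinal
    linarith
  refine le_antisymm (ciSup_le (fun H => hup H.1 H.2)) (max_le hlow1 hlow2)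


end FPA
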